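/- Let G be a finite simple graph. Then |V(G)| − Z_d(G) equals the size of a largest immutable triangle of G. -/

import Mathlib

/-!  Common definitions: zero forcing (standard, loop, positive semidefinite),
zero-nonzero patterns, triangles, and related graph parameters. -/

variable {V : Type*}

/-- Standard zero forcing rule: with filled set `S`, the filled vertex `v` can force
its unique unfilled neighbor `u`. -/
def StdForce (G : SimpleGraph V) (S : Set V) (v u : V) : Prop :=
  v ∈ S ∧ u ∉ S ∧ G.Adj v u ∧ ∀ w, G.Adj v w → w ∉ S → w = u

/-- Adjacency in the looping of `G` with loops at the vertices in `L`
(a vertex counts as its own neighbor iff it has a loop). -/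
def LoopAdj (G : SimpleGraph V) (L : Set V) (v w : V) : Prop :=
  G.Adj v w ∨ (v = w ∧ v ∈ L)

/-- Loop zero forcing rule (the forcing vertex need not be filled): `v` can force `u`
if `u` is the only unfilled neighbor of `v` in the looping. -/
def LoopForce (G : SimpleGraph V) (L : Set V) (S : Set V) (v u : V) : Prop :=
  u ∉ S ∧ LoopAdj G L v u ∧ ∀ w, LoopAdj G L v w → w ∉ S → w = u

/-- Positive semidefinite zero forcing rule: the filled vertex `v` can force the unfilled
vertex `u` if `u` is the only neighbor of `v` in the connected component of `u` of the
subgraph induced by the unfilled vertices. -/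
def PsdForce (G : SimpleGraph V) (S : Set V) (v u : V) : Prop :=
  v ∈ S ∧ u ∉ S ∧ G.Adj v u ∧
    ∀ w, G.Adj v w → w ∉ S →
      Relation.ReflTransGen (fun a b => G.Adj a b ∧ a ∉ S ∧ b ∉ S) u w → w = u

/-- The vertices performing a force in a forcing sequence. -/
def sourcesOf (seq : List (V × V)) : Set V := {v | ∃ p ∈ seq, p.1 = v}

/-- The vertices that get forced in a forcing sequence. -/
def targetsOf (seq : List (V × V)) : Set V := {u | ∃ p ∈ seq, p.2 = u}

/-- The filled set after performing all forces of `seq` starting from `F`. -/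
def filledAfter (F : Set V) (seq : List (V × V)) : Set V := F ∪ targetsOf seq

/-- `ValidSeq rule seq F`: starting with `F` as the filled set, the sequence of forces
`seq` is permitted (each force in turn is allowed by `rule`, and each vertex forces
at most once). -/
def ValidSeq (rule : Set V → V → V → Prop) : List (V × V) → Set V → Prop
  | [], _ => True
  | (v, u) :: rest, F => rule F v u ∧ (∀ p ∈ rest, p.1 ≠ v) ∧ ValidSeq rule rest (insert u F)

/-- `F` is a zero forcing set w.r.t. the forcing rule `rule`. -/
def IsZFSet (rule : Set V → V → V → Prop) (F : Set V) : Prop :=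
  ∃ seq : List (V × V), ValidSeq rule seq F ∧ filledAfter F seq = Set.univ

/-- `F` is a zero forcing set (w.r.t. `rule`) from which `R` can be the set of vertices
that force: some (automatically complete) forcing sequence from `F` fills every vertex
and the set of vertices performing a force is exactly `R`. -/
def ForcesWith (rule : Set V → V → V → Prop) (F R : Set V) : Prop :=
  ∃ seq : List (V × V), ValidSeq rule seq F ∧ filledAfter F seq = Set.univ ∧
    sourcesOf seq = R

/-- The zero forcing number w.r.t. a forcing rule. -/
noncomputable def Znum (rule : Set V → V → V → Prop) : ℕ :=
  sInf {n | ∃ F : Set V, IsZFSet rule F ∧ F.ncard = n}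

/-- The (standard) zero forcing number `Z(G)`. -/
noncomputable def Z (G : SimpleGraph V) : ℕ := Znum (StdForce G)

/-- The zero forcing number of the looping of `G` with loops at `L`. -/
noncomputable def Zloop (G : SimpleGraph V) (L : Set V) : ℕ := Znum (LoopForce G L)

/-- The positive semidefinite zero forcing number `Z₊(G)`. -/
noncomputable def Zplus (G : SimpleGraph V) : ℕ := Znum (PsdForce G)

/-- The enhanced zero forcing number `Ẑ(G)`: the maximum over all loopings of `G` of the
zero forcing number of the looping. -/
noncomputable def Zhat (G : SimpleGraph V) : ℕ := sSup {n | ∃ L : Set V, Zloop G L = n}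

/-- `F` is a direct zero forcing set for `G`: some forcing sequence from `F` fills every
vertex and every vertex that performs a force belongs to `F`. -/
def IsDirectZFSet (G : SimpleGraph V) (F : Set V) : Prop :=
  ∃ seq : List (V × V), ValidSeq (StdForce G) seq F ∧ filledAfter F seq = Set.univ ∧
    sourcesOf seq ⊆ F

/-- The direct zero forcing number `Z_d(G)`. -/
noncomputable def Zd (G : SimpleGraph V) : ℕ :=
  sInf {n | ∃ F : Set V, IsDirectZFSet G F ∧ F.ncard = n}

/-- A zero-nonzero pattern `Y` (entry `Y i j` means the `(i,j)` entry is `*`)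
has a `k × k` submatrix that is a triangle. -/
def HasTriOfSize {ρ γ : Type*} (Y : ρ → γ → Prop) (k : ℕ) : Prop :=
  ∃ (r : Fin k → ρ) (c : Fin k → γ), Function.Injective r ∧ Function.Injective c ∧
    (∀ i, Y (r i) (c i)) ∧ ∀ i j : Fin k, i < j → ¬ Y (r i) (c j)

/-- The triangle number `tri(Y)` of a zero-nonzero pattern. -/
noncomputable def tri {ρ γ : Type*} (Y : ρ → γ → Prop) : ℕ := sSup {k | HasTriOfSize Y k}

/-- Membership in `S_znz(G)`: off the diagonal, the pattern matches the adjacency of `G`. -/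
def InSznz (G : SimpleGraph V) (A : V → V → Prop) : Prop :=
  ∀ i j : V, i ≠ j → (A i j ↔ G.Adj i j)

/-- The zero-nonzero pattern of the looping of `G` with loops at `L`. -/
def loopPattern (G : SimpleGraph V) (L : Set V) : V → V → Prop :=
  fun i j => (i = j ∧ i ∈ L) ∨ (i ≠ j ∧ G.Adj i j)

/-- The submatrix of the pattern `Y` with rows `R` and columns `C` is a triangle:
there are enumerations of `R` and `C` realizing a lower-triangular pattern with `*`
diagonal (in particular `|R| = |C|`). -/
def SubIsTriangle {ρ γ : Type*} (Y : ρ → γ → Prop) (R : Finset ρ) (C : Finset γ) : Prop :=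
  ∃ (k : ℕ) (r : Fin k → ρ) (c : Fin k → γ),
    Function.Injective r ∧ Function.Injective c ∧
    (∀ x : ρ, x ∈ R ↔ ∃ i, r i = x) ∧ (∀ y : γ, y ∈ C ↔ ∃ i, c i = y) ∧
    (∀ i, Y (r i) (c i)) ∧ ∀ i j : Fin k, i < j → ¬ Y (r i) (c j)

/-- `(R, C)` is a persistent triangle of `G`. -/
def PersistentTriangle (G : SimpleGraph V) (R C : Finset V) : Prop :=
  ∀ A : V → V → Prop, InSznz G A → SubIsTriangle A R C

/-- `F` is a direct zero forcing set for `G` from which `R` can be the set of vertices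
that force. -/
def DirectForcesWith (G : SimpleGraph V) (F R : Set V) : Prop :=
  ∃ seq : List (V × V), ValidSeq (StdForce G) seq F ∧ filledAfter F seq = Set.univ ∧
    sourcesOf seq = R ∧ R ⊆ F

/-- `(range r, range c)` is a partition of `G` according to the `m × n` pattern `Y`,
with labelings given by `r` and `c`. -/
def PartitionAccording (G : SimpleGraph V) {m n : ℕ} (Y : Fin m → Fin n → Prop)
    (r : Fin m → V) (c : Fin n → V) : Prop :=
  Function.Injective r ∧ Function.Injective c ∧ (∀ i j, r i ≠ c j) ∧
    (∀ v : V, (∃ i, r i = v) ∨ (∃ j, c j = v)) ∧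
    ∀ i j, G.Adj (r i) (c j) ↔ Y i j

/-- `F` is a zero forcing set for `G` that forces from `V1` to `V2`. -/
def ForcesFromTo (G : SimpleGraph V) (F V1 V2 : Set V) : Prop :=
  V1 ⊆ F ∧ ∃ seq : List (V × V), ValidSeq (StdForce G) seq F ∧
    filledAfter F seq = Set.univ ∧ sourcesOf seq ⊆ V1 ∧ targetsOf seq ⊆ V2

/-- `(V1, V2)` is a partition of the vertex set of `G` into two cliques. -/
def IsCliquePartition (G : SimpleGraph V) (V1 V2 : Set V) : Prop :=
  Disjoint V1 V2 ∧ V1 ∪ V2 = Set.univ ∧ G.IsClique V1 ∧ G.IsClique V2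

/-- `G` is cobipartite. -/
def Cobipartite (G : SimpleGraph V) : Prop := ∃ V1 V2 : Set V, IsCliquePartition G V1 V2

/-- `G` is the cobipartite graph associated with the pattern `Y`, via labelings `r`, `c`. -/
def CobipAssociated (G : SimpleGraph V) {m n : ℕ} (Y : Fin m → Fin n → Prop)
    (r : Fin m → V) (c : Fin n → V) : Prop :=
  PartitionAccording G Y r c ∧ G.IsClique (Set.range r) ∧ G.IsClique (Set.range c)

/-- `z` is a critical vertex: some optimal forcing sequence neither lets `z` force
nor forces `z`. -/
def Critical (G : SimpleGraph V) (z : V) : Prop :=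
  ∃ (F : Set V) (seq : List (V × V)), F.ncard = Z G ∧ ValidSeq (StdForce G) seq F ∧
    filledAfter F seq = Set.univ ∧ z ∉ sourcesOf seq ∧ z ∉ targetsOf seq

/-- `z` is an uncritical vertex: in every optimal forcing sequence, exactly one of the
following holds: `z` performs a force, or `z` gets forced. -/
def Uncritical (G : SimpleGraph V) (z : V) : Prop :=
  ∀ (F : Set V) (seq : List (V × V)), F.ncard = Z G → ValidSeq (StdForce G) seq F →
    filledAfter F seq = Set.univ → (z ∈ sourcesOf seq ↔ z ∉ targetsOf seq)

/-- The maximum nullity `M(G)` over the field `𝔽`. -/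
noncomputable def Mnum (𝔽 : Type*) [Field 𝔽] [Fintype V] [DecidableEq V]
    (G : SimpleGraph V) : ℕ :=
  sSup {k | ∃ A : Matrix V V 𝔽, A.IsSymm ∧ (∀ i j : V, i ≠ j → (A i j ≠ 0 ↔ G.Adj i j)) ∧
    k = Fintype.card V - A.rank}

/-- The minimum rank `mr_𝔽(Y)` of a zero-nonzero pattern over the field `𝔽`. -/
noncomputable def mr (𝔽 : Type*) [Field 𝔽] {m n : ℕ} (Y : Fin m → Fin n → Prop) : ℕ :=
  sInf {k | ∃ A : Matrix (Fin m) (Fin n) 𝔽, (∀ i j, A i j ≠ 0 ↔ Y i j) ∧ A.rank = k}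

/-- `G` is a `k`-tree: there is a construction ordering of the vertices in which the
first `k+1` vertices form a clique and every later vertex is adjacent among the earlier
vertices to exactly a `k`-clique. -/
def IsKTree (k : ℕ) [Fintype V] (G : SimpleGraph V) : Prop :=
  k + 1 ≤ Fintype.card V ∧ ∃ ord : V ≃ Fin (Fintype.card V),
    (∀ u v : V, (ord u : ℕ) < k + 1 → (ord v : ℕ) < k + 1 → u ≠ v → G.Adj u v) ∧
    ∀ v : V, k + 1 ≤ (ord v : ℕ) →
      G.IsClique {u : V | (ord u : ℕ) < (ord v : ℕ) ∧ G.Adj u v} ∧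
      {u : V | (ord u : ℕ) < (ord v : ℕ) ∧ G.Adj u v}.ncard = k

/-! ### Auxiliary lemmas -/

lemma targetsOf_nil : targetsOf ([] : List (V × V)) = ∅ := by
  simp [targetsOf]

lemma targetsOf_cons (p : V × V) (l : List (V × V)) :
    targetsOf (p :: l) = insert p.2 (targetsOf l) := by
  ext x
  simp only [targetsOf, List.mem_cons, Set.mem_setOf_eq, Set.mem_insert_iff]
  constructor
  · rintro ⟨q, (rfl | hq), rfl⟩
    · exact Or.inl rfl
    · exact Or.inr ⟨q, hq, rfl⟩
  · rintro (rfl | ⟨q, hq, rfl⟩)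
    · exact ⟨p, Or.inl rfl, rfl⟩
    · exact ⟨q, Or.inr hq, rfl⟩

lemma sourcesOf_map_tri {k : ℕ} (r c : Fin k → V) :
    sourcesOf ((List.finRange k).map fun i => (r i, c i)) = Set.range r := by
  ext x
  simp [sourcesOf, Set.range]

lemma targetsOf_map_tri {k : ℕ} (r c : Fin k → V) :
    targetsOf ((List.finRange k).map fun i => (r i, c i)) = Set.range c := by
  ext x
  simp [targetsOf, Set.range]

/-- A triangle structure gives a valid forcing sequence. -/
lemma validSeq_of_triangle (G : SimpleGraph V) :
    ∀ (k : ℕ) (r c : Fin k → V) (F : Set V),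
      Function.Injective r → Function.Injective c →
      (∀ i, r i ∈ F) → (∀ i, c i ∉ F) →
      (∀ i, G.Adj (r i) (c i)) →
      (∀ i j, i < j → ¬ G.Adj (r i) (c j)) →
      (∀ i w, G.Adj (r i) w → w ∉ F → ∃ j, c j = w) →
      ValidSeq (StdForce G) ((List.finRange k).map fun i => (r i, c i)) F := by
  intro k
  induction k with
  | zero =>
    intro r c F _ _ _ _ _ _ _
    simp only [List.finRange_zero, List.map_nil]
    trivial
  | succ n ih =>
    intro r c F hr hc hrF hcF hadj htri hnbr
    rw [List.finRange_succ, List.map_cons, List.map_map]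
    refine ⟨?_, ?_, ?_⟩
    · refine ⟨hrF 0, hcF 0, hadj 0, ?_⟩
      intro w hw hwF
      obtain ⟨j, rfl⟩ := hnbr 0 w hw hwF
      by_contra hne
      have hj0 : (0 : Fin (n + 1)) < j := Fin.pos_of_ne_zero (fun h => hne (by rw [h]))
      exact htri 0 j hj0 hw
    · intro p hp
      simp only [List.mem_map, Function.comp] at hp
      obtain ⟨i, _, rfl⟩ := hp
      simpa using fun h => Fin.succ_ne_zero i (hr h)
    · have := ih (fun i => r i.succ) (fun i => c i.succ) (insert (c 0) F)
        (fun a b h => Fin.succ_injective n (hr h))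
        (fun a b h => Fin.succ_injective n (hc h))
        (fun i => Set.mem_insert_iff.mpr (Or.inr (hrF i.succ)))
        (fun i hi => by
          rcases Set.mem_insert_iff.mp hi with h | h
          · exact Fin.succ_ne_zero i (hc h)
          · exact hcF i.succ h)
        (fun i => hadj i.succ)
        (fun i j hij => htri i.succ j.succ (Fin.succ_lt_succ_iff.mpr hij))
        (fun i w hw hwF => by
          have hwF' : w ∉ F := fun h => hwF (Set.mem_insert_iff.mpr (Or.inr h))
          obtain ⟨j, rfl⟩ := hnbr i.succ w hw hwF'
          rcases Fin.eq_zero_or_eq_succ j with h | ⟨j', rfl⟩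
          · exact absurd (Set.mem_insert_iff.mpr (Or.inl (by rw [h]))) hwF
          · exact ⟨j', rfl⟩)
      simpa [Function.comp_def] using this

/-- In a valid sequence, each vertex forces at most once: sources are nodup. -/
lemma validSeq_fst_nodup (rule : Set V → V → V → Prop) :
    ∀ (seq : List (V × V)) (F : Set V), ValidSeq rule seq F →
      (seq.map Prod.fst).Nodup := by
  intro seq
  induction seq with
  | nil => intro F _; simp
  | cons q rest ih =>
    obtain ⟨v, u⟩ := q
    intro F hv
    obtain ⟨_, hne, hrest⟩ := hv
    simp only [List.map_cons, List.nodup_cons]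
    refine ⟨?_, ih _ hrest⟩
    simp only [List.mem_map]
    rintro ⟨p, hp, h⟩
    exact hne p hp h

/-- For the standard rule, targets avoid the initial filled set and are nodup. -/
lemma validSeq_snd_props (G : SimpleGraph V) :
    ∀ (seq : List (V × V)) (F : Set V), ValidSeq (StdForce G) seq F →
      (∀ p ∈ seq, p.2 ∉ F) ∧ (seq.map Prod.snd).Nodup := by
  intro seq
  induction seq with
  | nil => intro F _; simp
  | cons q rest ih =>
    obtain ⟨v, u⟩ := q
    intro F hv
    obtain ⟨hf, _, hrest⟩ := hv
    obtain ⟨ih1, ih2⟩ := ih _ hrest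
    constructor
    · intro p hp
      rcases List.mem_cons.mp hp with rfl | hp'
      · exact hf.2.1
      · exact fun h => ih1 p hp' (Set.mem_insert_iff.mpr (Or.inr h))
    · simp only [List.map_cons, List.nodup_cons]
      refine ⟨?_, ih2⟩
      simp only [List.mem_map]
      rintro ⟨p, hp, h⟩
      exact ih1 p hp (h ▸ Set.mem_insert_iff.mpr (Or.inl rfl))

/-- Each force in a valid sequence is a valid standard force at its time. -/
lemma validSeq_force_at (G : SimpleGraph V) :
    ∀ (seq : List (V × V)) (F : Set V), ValidSeq (StdForce G) seq F →
      ∀ pre p post, seq = pre ++ p :: post →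
        StdForce G (F ∪ targetsOf pre) p.1 p.2 := by
  intro seq
  induction seq with
  | nil => intro F _ pre p post h; simp at h
  | cons q rest ih =>
    obtain ⟨v, u⟩ := q
    intro F hv pre p post h
    obtain ⟨hf, _, hrest⟩ := hv
    cases pre with
    | nil =>
      simp only [List.nil_append, List.cons.injEq] at h
      rw [targetsOf_nil, Set.union_empty, ← h.1]
      exact hf
    | cons q' pre' =>
      simp only [List.cons_append, List.cons.injEq] at h
      obtain ⟨rfl, h2⟩ := h
      have := ih _ hrest pre' p post h2
      rw [targetsOf_cons, Set.union_insert]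
      rwa [Set.insert_union] at this

lemma zd_set_nonempty (G : SimpleGraph V) [Fintype V] :
    ∃ n, ∃ F : Set V, IsDirectZFSet G F ∧ F.ncard = n := by
  refine ⟨(Set.univ : Set V).ncard, Set.univ, ⟨[], trivial, ?_, ?_⟩, rfl⟩
  · rw [filledAfter, targetsOf_nil, Set.union_empty]
  · simp [sourcesOf]

/-- `|V(G)| − Z_d(G)` equals the size of a largest immutable triangle
of `G`. -/
theorem card_sub_Zd_eq_max_immutable_triangle
    {V : Type*} [Fintype V] [DecidableEq V] (G : SimpleGraph V) :
    Fintype.card V - Zd G =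
      sSup {k | ∃ R C : Finset V, R.card = k ∧ C.card = k ∧
        PersistentTriangle G R C ∧ Disjoint R C} := by
  classical
  set S : Set ℕ := {k | ∃ R C : Finset V, R.card = k ∧ C.card = k ∧
      PersistentTriangle G R C ∧ Disjoint R C} with hSdef
  have hbdd : BddAbove S := by
    refine ⟨Fintype.card V, ?_⟩
    rintro k ⟨R, C, hR, -, -, -⟩
    exact hR ▸ le_trans R.card_le_univ (le_of_eq Finset.card_univ)
  -- Direction A: every element of S is at most |V| - Zd G
  have dirA : ∀ k ∈ S, k ≤ Fintype.card V - Zd G := by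
    rintro k ⟨R, C, hR, hC, hPT, hdisj⟩
    have hklecard : k ≤ Fintype.card V := by
      exact hC ▸ le_trans C.card_le_univ (le_of_eq Finset.card_univ)
    set A0 : V → V → Prop := fun i j => i ≠ j ∧ G.Adj i j with hA0def
    have hA0 : InSznz G A0 := fun i j hij => ⟨fun h => h.2, fun h => ⟨hij, h⟩⟩
    obtain ⟨m, r, c, hrInj, hcInj, hRmem, hCmem, hdiag, hoff⟩ := hPT A0 hA0
    have hriR : ∀ i, r i ∈ R := fun i => (hRmem (r i)).mpr ⟨i, rfl⟩
    have hciC : ∀ i, c i ∈ C := fun i => (hCmem (c i)).mpr ⟨i, rfl⟩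
    have hne : ∀ i j, r i ≠ c j := by
      intro i j h
      exact Finset.disjoint_left.mp hdisj (hriR i) (h ▸ hciC j)
    set F : Set V := (↑C : Set V)ᶜ with hFdef
    have hrF : ∀ i, r i ∈ F := by
      intro i
      simp only [hFdef, Set.mem_compl_iff, Finset.mem_coe]
      exact fun h => Finset.disjoint_left.mp hdisj (hriR i) h
    have hcF : ∀ i, c i ∉ F := by
      intro i
      simp only [hFdef, Set.mem_compl_iff, Finset.mem_coe, not_not]
      exact hciC i
    have hadj : ∀ i, G.Adj (r i) (c i) := fun i => (hdiag i).2
    have htri : ∀ i j, i < j → ¬ G.Adj (r i) (c j) :=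
      fun i j hij h => hoff i j hij ⟨hne i j, h⟩
    have hnbr : ∀ i w, G.Adj (r i) w → w ∉ F → ∃ j, c j = w := by
      intro i w _ hw
      simp only [hFdef, Set.mem_compl_iff, Finset.mem_coe, not_not] at hw
      exact (hCmem w).mp hw
    have hvalid := validSeq_of_triangle G m r c F hrInj hcInj hrF hcF hadj htri hnbr
    have hDZ : IsDirectZFSet G F := by
      refine ⟨_, hvalid, ?_, ?_⟩
      · rw [filledAfter, targetsOf_map_tri]
        ext x
        simp only [Set.mem_union, Set.mem_univ, iff_true, hFdef, Set.mem_compl_iff,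
          Finset.mem_coe, Set.mem_range]
        by_cases hx : x ∈ C
        · exact Or.inr ((hCmem x).mp hx)
        · exact Or.inl hx
      · rw [sourcesOf_map_tri]
        rintro x ⟨i, rfl⟩
        exact hrF i
    have hFcard : F.ncard = Fintype.card V - k := by
      rw [hFdef, ← Finset.coe_compl, Set.ncard_coe_finset, Finset.card_compl, hC]
    have hZd : Zd G ≤ Fintype.card V - k := by
      rw [Zd]
      exact Nat.sInf_le ⟨F, hDZ, hFcard⟩
    omega
  -- Direction B: |V| - Zd G belongs to S
  have hmem : Zd G ∈ {n | ∃ F : Set V, IsDirectZFSet G F ∧ F.ncard = n} :=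
    Nat.sInf_mem (zd_set_nonempty G)
  obtain ⟨F, ⟨seq, hvalid, hfill, hsrc⟩, hFcard⟩ := hmem
  set k := seq.length with hkdef
  set r : Fin k → V := fun i => (seq.get i).1 with hrdef
  set c : Fin k → V := fun i => (seq.get i).2 with hcdef
  have nf := validSeq_fst_nodup (StdForce G) seq F hvalid
  obtain ⟨htF, ns⟩ := validSeq_snd_props G seq F hvalid
  have hrInj : Function.Injective r := by
    intro i j h
    have h1 : (seq.map Prod.fst)[(i : ℕ)]'(by simp; exact i.2) = (seq.map Prod.fst)[(j : ℕ)]'(by simp; exact j.2) := by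
      simpa [List.getElem_map, hrdef] using h
    exact Fin.ext (nf.getElem_inj_iff.mp h1)
  have hcInj : Function.Injective c := by
    intro i j h
    have h1 : (seq.map Prod.snd)[(i : ℕ)]'(by simp; exact i.2) = (seq.map Prod.snd)[(j : ℕ)]'(by simp; exact j.2) := by
      simpa [List.getElem_map, hcdef] using h
    exact Fin.ext (ns.getElem_inj_iff.mp h1)
  have hforce : ∀ i : Fin k, StdForce G (F ∪ targetsOf (seq.take i)) (r i) (c i) := by
    intro i
    apply validSeq_force_at G seq F hvalid (seq.take i) (seq.get i) (seq.drop (i + 1))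
    conv_lhs => rw [← List.take_append_drop (i : ℕ) seq]
    congr 1
    rw [List.drop_eq_getElem_cons i.2]
    rfl
  have hmemseq : ∀ i : Fin k, seq.get i ∈ seq := fun i => by
    rw [List.get_eq_getElem]; exact List.getElem_mem i.2
  have hrF : ∀ i, r i ∈ F := fun i => hsrc ⟨seq.get i, hmemseq i, rfl⟩
  have hcF : ∀ i, c i ∉ F := fun i => htF (seq.get i) (hmemseq i)
  have hadj : ∀ i, G.Adj (r i) (c i) := fun i => (hforce i).2.2.1
  have htri : ∀ i j, i < j → ¬ G.Adj (r i) (c j) := by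
    intro i j hij hadj'
    have hcj : c j ∉ F ∪ targetsOf (seq.take i) := by
      rintro (h | h)
      · exact hcF j h
      · obtain ⟨p, hp, hp2⟩ := h
        obtain ⟨t, ht, hpt⟩ := List.mem_iff_getElem.mp hp
        have htlt : t < (i : ℕ) := lt_of_lt_of_le ht (by simp [List.length_take])
        have htk : t < k := lt_trans htlt i.2
        have : (seq.map Prod.snd)[t]'(by simpa) = (seq.map Prod.snd)[(j : ℕ)]'(by simp; exact j.2) := by
          have : seq[t].2 = c j := by
            rw [← hpt] at hp2
            simpa [List.getElem_take] using hp2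
          simpa [List.getElem_map, hcdef] using this
        have := ns.getElem_inj_iff.mp this
        omega
    have h2 : j = i := hcInj ((hforce i).2.2.2 (c j) hadj' hcj)
    rw [h2] at hij
    exact lt_irrefl _ hij
  set Rf : Finset V := Finset.image r Finset.univ with hRfdef
  set Cf : Finset V := Finset.image c Finset.univ with hCfdef
  have hRcard : Rf.card = k := by
    rw [hRfdef, Finset.card_image_of_injective _ hrInj, Finset.card_univ, Fintype.card_fin]
  have hCcard : Cf.card = k := by
    rw [hCfdef, Finset.card_image_of_injective _ hcInj, Finset.card_univ, Fintype.card_fin]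
  have hdisj : Disjoint Rf Cf := by
    rw [Finset.disjoint_left]
    intro x hx hxC
    obtain ⟨i, -, rfl⟩ := Finset.mem_image.mp hx
    obtain ⟨j, -, hj⟩ := Finset.mem_image.mp hxC
    exact hcF j (hj ▸ hrF i)
  have hneRC : ∀ i j, r i ≠ c j := by
    intro i j h
    exact hcF j (h ▸ hrF i)
  have hPT : PersistentTriangle G Rf Cf := by
    intro A hA
    refine ⟨k, r, c, hrInj, hcInj, ?_, ?_, ?_, ?_⟩
    · intro x
      simp [hRfdef, Finset.mem_image, eq_comm]
    · intro x
      simp [hCfdef, Finset.mem_image, eq_comm]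
    · exact fun i => (hA _ _ (hneRC i i)).mpr (hadj i)
    · exact fun i j hij hAij => htri i j hij ((hA _ _ (hneRC i j)).mp hAij)
  have htgt : targetsOf seq = (↑Cf : Set V) := by
    ext x
    simp only [targetsOf, Set.mem_setOf_eq, hCfdef, Finset.coe_image, Finset.coe_univ,
      Set.image_univ, Set.mem_range]
    constructor
    · rintro ⟨p, hp, rfl⟩
      obtain ⟨t, ht, rfl⟩ := List.mem_iff_getElem.mp hp
      exact ⟨⟨t, ht⟩, rfl⟩
    · rintro ⟨i, rfl⟩
      exact ⟨seq.get i, hmemseq i, rfl⟩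
  have hcardeq : Fintype.card V = Zd G + k := by
    have hdisjFC : Disjoint F (↑Cf : Set V) := by
      rw [Set.disjoint_left]
      intro x hx hxC
      simp only [hCfdef, Finset.coe_image, Finset.coe_univ, Set.image_univ,
        Set.mem_range] at hxC
      obtain ⟨i, rfl⟩ := hxC
      exact hcF i hx
    have h1 : (Set.univ : Set V).ncard = F.ncard + (↑Cf : Set V).ncard := by
      rw [← hfill, filledAfter, htgt, Set.ncard_union_eq hdisjFC (Set.toFinite F)
        (Set.toFinite _)]
    rw [Set.ncard_univ, Nat.card_eq_fintype_card] at h1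
    rw [h1, hFcard, Set.ncard_coe_finset, hCcard]
  have hmemS : Fintype.card V - Zd G ∈ S := by
    have : Fintype.card V - Zd G = k := by omega
    rw [this]
    exact ⟨Rf, Cf, hRcard, hCcard, hPT, hdisj⟩
  exact le_antisymm (le_csSup hbdd hmemS) (csSup_le ⟨_, hmemS⟩ dirA)
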